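/- Sub-multiplicativity of the divisor function: for all u, v ∈ S one has τ(u * v) ≤ τ(u) · τ(v). Moreover equality holds if and only if u and v are castled-free, i.e., there exists x ∈ S such that the only common divisor of u and x in S is 1 and u·S ∩ x·S = (u * v)·S. -/
import Mathlib


open scoped BigOperators

/-- `u` divides `w` in `S`: `w ∈ u·S`. -/
def SDvd {G : Type*} [Group G] (S : Submonoid G) (u w : G) : Prop := ∃ s ∈ S, w = u * s

/-- The left set `u·S = {u * s : s ∈ S}`. -/
def leftSet {G : Type*} [Group G] (S : Submonoid G) (u : G) : Set G := {w | ∃ s ∈ S, w = u * s}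

/-- `τ(u)`: the number of ordered factorizations `u = v * w` with `v, w ∈ S`. -/
noncomputable def tau {G : Type*} [Group G] (S : Submonoid G) (u : G) : ℕ :=
  Set.ncard {p : G × G | p.1 ∈ S ∧ p.2 ∈ S ∧ p.1 * p.2 = u}

/-- An integral monoid: a submonoid of a group satisfying Axioms I, II, III. -/
structure IntegralMonoid {G : Type*} [Group G] (S : Submonoid G) : Prop where
  ax1 : ∀ u ∈ S, u⁻¹ ∈ S → u = 1
  ax2 : ∀ u : G, ∃ x ∈ S, ∃ y ∈ S, u = x * y⁻¹ ∧
        ∀ z ∈ S, ∀ w ∈ S, u = z * w⁻¹ → ∃ c ∈ S, z = x * c ∧ w = y * c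
  ax3 : ∀ u ∈ S, {p : G × G | p.1 ∈ S ∧ p.2 ∈ S ∧ p.1 * p.2 = u}.Finite

/-- Axiom IV′ (homogeneity), in the equivalent form proved in the paper. -/
def Homogeneous {G : Type*} [Group G] (S : Submonoid G) : Prop :=
  ∀ w u v : G, w ∈ S → u ∈ S → v ∈ S →
    (∀ d ∈ S, SDvd S d w → SDvd S d u → d = 1) →
    (∀ d ∈ S, SDvd S d w → SDvd S d v → d = 1) →
    leftSet S w ∩ leftSet S u = leftSet S w ∩ leftSet S v → u = v

namespace TauSub

variable {G : Type*} [Group G] {S : Submonoid G}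

theorem sdvd_refl (a : G) : SDvd S a a := ⟨1, S.one_mem, (mul_one a).symm⟩

theorem sdvd_trans {a b c : G} (h1 : SDvd S a b) (h2 : SDvd S b c) : SDvd S a c := by
  obtain ⟨s, hs, rfl⟩ := h1
  obtain ⟨r, hr, rfl⟩ := h2
  exact ⟨s * r, S.mul_mem hs hr, mul_assoc _ _ _⟩

theorem sdvd_mul {a : G} (s : G) (hs : s ∈ S) : SDvd S a (a * s) := ⟨s, hs, rfl⟩

theorem one_sdvd {a : G} (ha : a ∈ S) : SDvd S 1 a := ⟨a, ha, (one_mul a).symm⟩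

theorem mul_eq_one_left (hS : IntegralMonoid S) {s r : G} (hs : s ∈ S) (hr : r ∈ S)
    (h : s * r = 1) : s = 1 := by
  have h2 : s⁻¹ = r := inv_eq_of_mul_eq_one_right h
  exact hS.ax1 s hs (h2 ▸ hr)

theorem sdvd_one (hS : IntegralMonoid S) {a : G} (ha : a ∈ S) (h : SDvd S a 1) : a = 1 := by
  obtain ⟨s, hs, h1⟩ := h
  exact mul_eq_one_left hS ha hs h1.symm

theorem sdvd_antisymm (hS : IntegralMonoid S) {a b : G} (ha : a ∈ S) (hb : b ∈ S)
    (h1 : SDvd S a b) (h2 : SDvd S b a) : a = b := by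
  obtain ⟨s, hs, rfl⟩ := h1
  obtain ⟨r, hr, h⟩ := h2
  have h3 : a * 1 = a * (s * r) := by rw [mul_one, ← mul_assoc]; exact h
  have h4 : s * r = 1 := (mul_left_cancel h3).symm
  have h5 : s = 1 := mul_eq_one_left hS hs hr h4
  rw [h5, mul_one]

theorem mem_leftSet {a w : G} : w ∈ leftSet S a ↔ SDvd S a w := Iff.rfl

theorem self_mem_leftSet (a : G) : a ∈ leftSet S a := sdvd_refl a

theorem leftSet_inj (hS : IntegralMonoid S) {a b : G} (ha : a ∈ S) (hb : b ∈ S)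
    (h : leftSet S a = leftSet S b) : a = b := by
  have h1 : b ∈ leftSet S a := h ▸ self_mem_leftSet b
  have h2 : a ∈ leftSet S b := h.symm ▸ self_mem_leftSet a
  exact sdvd_antisymm hS ha hb h1 h2

/-- Left divisors of `α` lying in `S`. -/
def divSet (S : Submonoid G) (α : G) : Set G := {d | d ∈ S ∧ SDvd S d α}

theorem divSet_finite (hS : IntegralMonoid S) {α : G} (hα : α ∈ S) : (divSet S α).Finite := by
  have h3 := hS.ax3 α hα
  have hsub : divSet S α ⊆ (fun p : G × G => p.1) ''
      {p : G × G | p.1 ∈ S ∧ p.2 ∈ S ∧ p.1 * p.2 = α} := by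
    rintro d ⟨hd, s, hs, hds⟩
    exact ⟨(d, s), ⟨hd, hs, hds.symm⟩, rfl⟩
  exact (h3.image _).subset hsub

theorem tau_eq_ncard (hS : IntegralMonoid S) {α : G} (hα : α ∈ S) :
    tau S α = (divSet S α).ncard := by
  unfold tau
  have himg : {p : G × G | p.1 ∈ S ∧ p.2 ∈ S ∧ p.1 * p.2 = α} =
      (fun d => (d, d⁻¹ * α)) '' divSet S α := by
    ext ⟨p1, p2⟩
    constructor
    · rintro ⟨h1, h2, h3⟩
      refine ⟨p1, ⟨h1, ⟨p2, h2, h3.symm⟩⟩, ?_⟩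
      show (p1, p1⁻¹ * α) = (p1, p2)
      have : p1⁻¹ * α = p2 := by rw [← h3]; group
      rw [this]
    · rintro ⟨d, ⟨hd, s, hs, rfl⟩, heq⟩
      have heq' : (d, d⁻¹ * (d * s)) = (p1, p2) := heq
      rw [← heq']
      refine ⟨hd, ?_, ?_⟩
      · show d⁻¹ * (d * s) ∈ S
        simpa using hs
      · show d * (d⁻¹ * (d * s)) = d * s
        group
  rw [himg, Set.ncard_image_of_injective _ (fun x y h => (Prod.ext_iff.mp h).1)]

theorem lcm_exists (hS : IntegralMonoid S) {a b : G} (ha : a ∈ S) (hb : b ∈ S) :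
    ∃ m, m ∈ S ∧ SDvd S a m ∧ SDvd S b m ∧
      leftSet S a ∩ leftSet S b = leftSet S m := by
  obtain ⟨x, hx, y, hy, hxy, hmin⟩ := hS.ax2 (a⁻¹ * b)
  have key : a * x = b * y := by
    have h1 : a * (a⁻¹ * b) = a * (x * y⁻¹) := by rw [hxy]
    have h2 : b = a * (x * y⁻¹) := by rw [← h1]; group
    rw [h2]; group
  refine ⟨a * x, S.mul_mem ha hx, sdvd_mul x hx, by rw [key]; exact sdvd_mul y hy, ?_⟩
  ext c
  constructor
  · rintro ⟨⟨s, hs, rfl⟩, ⟨r, hr, hcr⟩⟩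
    have hfrac : a⁻¹ * b = s * r⁻¹ := by
      have hb' : b = a * s * r⁻¹ := by rw [hcr]; group
      rw [hb']; group
    obtain ⟨e, he, hse, _⟩ := hmin s hs r hr hfrac
    exact ⟨e, he, by rw [hse]; group⟩
  · rintro ⟨e, he, rfl⟩
    constructor
    · exact ⟨x * e, S.mul_mem hx he, by group⟩
    · exact ⟨y * e, S.mul_mem hy he, by rw [show a * x * e = b * y * e by rw [key]]; group⟩

theorem gcd_exists (hS : IntegralMonoid S) {a b : G} (ha : a ∈ S) (hb : b ∈ S) :
    ∃ g, g ∈ S ∧ SDvd S g a ∧ SDvd S g b ∧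
      ∀ d ∈ S, SDvd S d a → SDvd S d b → SDvd S d g := by
  set Dc : Set G := {d | d ∈ S ∧ SDvd S d a ∧ SDvd S d b} with hDc
  have hfin : Dc.Finite := (divSet_finite hS ha).subset (fun d hd => ⟨hd.1, hd.2.1⟩)
  have hne : Dc.Nonempty := ⟨1, S.one_mem, one_sdvd ha, one_sdvd hb⟩
  obtain ⟨g, hg, hmax⟩ := Set.exists_max_image Dc (fun d => (divSet S d).ncard) hfin hne
  refine ⟨g, hg.1, hg.2.1, hg.2.2, ?_⟩
  intro d hd hda hdb
  obtain ⟨m, hmS, hgm, hdm, hset⟩ := lcm_exists hS hg.1 hd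
  have hma : SDvd S m a := by
    have : a ∈ leftSet S g ∩ leftSet S d := ⟨hg.2.1, hda⟩
    rw [hset] at this; exact this
  have hmb : SDvd S m b := by
    have : b ∈ leftSet S g ∩ leftSet S d := ⟨hg.2.2, hdb⟩
    rw [hset] at this; exact this
  have hmDc : m ∈ Dc := ⟨hmS, hma, hmb⟩
  have hsub : divSet S g ⊆ divSet S m := fun e he => ⟨he.1, sdvd_trans he.2 hgm⟩
  have heq : divSet S g = divSet S m :=
    Set.eq_of_subset_of_ncard_le hsub (hmax m hmDc) (divSet_finite hS hmS)
  have hmem : m ∈ divSet S g := by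
    rw [heq]; exact ⟨hmS, sdvd_refl m⟩
  exact sdvd_trans hdm hmem.2

/-- Shrinking the left element of a coprime lcm configuration (Lemmas A and B). -/
theorem shrink (hS : IntegralMonoid S) (hhom : Homogeneous S) {w s t a w₁ p : G}
    (hwS : w ∈ S) (hsS : s ∈ S) (htS : t ∈ S) (haS : a ∈ S) (hw₁S : w₁ ∈ S) (hpS : p ∈ S)
    (hw : w = a * w₁)
    (hgcd : ∀ d ∈ S, SDvd S d w → SDvd S d s → d = 1)
    (hlcm : leftSet S w ∩ leftSet S s = leftSet S (w * t))
    (hm : leftSet S a ∩ leftSet S s = leftSet S (a * p)) :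
    (∀ d ∈ S, SDvd S d w₁ → SDvd S d p → d = 1) ∧
      leftSet S w₁ ∩ leftSet S p = leftSet S (w₁ * t) := by
  constructor
  · -- Lemma A via homogeneity
    intro d hd hdw₁ hdp
    obtain ⟨p₂, hp₂, hpd⟩ := hdp
    have had : a * d ∈ S := S.mul_mem haS hd
    have hadw : SDvd S (a * d) w := by
      obtain ⟨w₂, hw₂, hdw⟩ := hdw₁
      exact ⟨w₂, hw₂, by rw [hw, hdw]; group⟩
    have haw : SDvd S a w := ⟨w₁, hw₁S, hw⟩
    have hgcd1 : ∀ e ∈ S, SDvd S e s → SDvd S e a → e = 1 :=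
      fun e he hes hea => hgcd e he (sdvd_trans hea haw) hes
    have hgcd2 : ∀ e ∈ S, SDvd S e s → SDvd S e (a * d) → e = 1 :=
      fun e he hes head => hgcd e he (sdvd_trans head hadw) hes
    have h1 : leftSet S s ∩ leftSet S a = leftSet S (a * p) := by
      rw [Set.inter_comm]; exact hm
    have hset : leftSet S s ∩ leftSet S a = leftSet S s ∩ leftSet S (a * d) := by
      rw [h1]
      ext c
      constructor
      · rintro ⟨f, hf, rfl⟩
        constructor
        · have hmem : (a * p) * f ∈ leftSet S s ∩ leftSet S a := by
            rw [h1]; exact ⟨f, hf, rfl⟩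
          exact hmem.1
        · exact ⟨p₂ * f, S.mul_mem hp₂ hf, by rw [hpd]; group⟩
      · rintro ⟨hcs, ⟨f, hf, rfl⟩⟩
        have hmem : (a * d) * f ∈ leftSet S s ∩ leftSet S a :=
          ⟨hcs, ⟨d * f, S.mul_mem hd hf, by group⟩⟩
        rw [h1] at hmem
        exact hmem
    have haad := hhom s a (a * d) hsS haS had hgcd1 hgcd2 hset
    have : a * 1 = a * d := by rw [mul_one]; exact haad
    exact (mul_left_cancel this).symm
  · -- Lemma B
    ext c
    constructor
    · rintro ⟨⟨α, hα, rfl⟩, ⟨β, hβ, hcb⟩⟩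
      have h1 : a * (w₁ * α) ∈ leftSet S w := ⟨α, hα, by rw [hw]; group⟩
      have h2 : a * (w₁ * α) ∈ leftSet S s := by
        have hap : a * (w₁ * α) ∈ leftSet S (a * p) := ⟨β, hβ, by rw [hcb]; group⟩
        rw [← hm] at hap
        exact hap.2
      have h3 : a * (w₁ * α) ∈ leftSet S (w * t) := by
        rw [← hlcm]; exact ⟨h1, h2⟩
      obtain ⟨e, he, h4⟩ := h3
      refine ⟨e, he, ?_⟩
      have h5 : a * (w₁ * α) = a * (w₁ * t * e) := by rw [h4, hw]; group
      exact mul_left_cancel h5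
    · rintro ⟨e, he, rfl⟩
      constructor
      · exact ⟨t * e, S.mul_mem htS he, by group⟩
      · have h2 : a * (w₁ * t * e) ∈ leftSet S s := by
          have hmem : a * (w₁ * t * e) ∈ leftSet S (w * t) := ⟨e, he, by rw [hw]; group⟩
          rw [← hlcm] at hmem
          exact hmem.2
        have h3 : a * (w₁ * t * e) ∈ leftSet S (a * p) := by
          rw [← hm]
          exact ⟨⟨w₁ * t * e, S.mul_mem (S.mul_mem hw₁S htS) he, rfl⟩, h2⟩
        obtain ⟨f, hf, h4⟩ := h3
        refine ⟨f, hf, ?_⟩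
        have h5 : a * (w₁ * t * e) = a * (p * f) := by rw [h4]; group
        exact mul_left_cancel h5

/-- Peel an irreducible off the right of a non-identity element. -/
theorem exists_irred_peel (hS : IntegralMonoid S) {x : G} (hx : x ∈ S) (hx1 : x ≠ 1) :
    ∃ y π, y ∈ S ∧ π ∈ S ∧ x = y * π ∧ π ≠ 1 ∧
      (∀ c ∈ S, SDvd S c π → c = 1 ∨ c = π) ∧
      (divSet S y).ncard < (divSet S x).ncard := by
  set T : Set G := {d | d ∈ S ∧ SDvd S d x ∧ d ≠ x} with hT
  have hTfin : T.Finite := (divSet_finite hS hx).subset (fun d hd => ⟨hd.1, hd.2.1⟩)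
  have hTne : T.Nonempty := ⟨1, S.one_mem, one_sdvd hx, fun h => hx1 h.symm⟩
  obtain ⟨y, hyT, hymax⟩ := Set.exists_max_image T (fun d => (divSet S d).ncard) hTfin hTne
  obtain ⟨hyS, ⟨π, hπS, hxyπ⟩, hyne⟩ := hyT
  have hπ1 : π ≠ 1 := by
    intro h
    exact hyne (by rw [hxyπ, h, mul_one])
  refine ⟨y, π, hyS, hπS, hxyπ, hπ1, ?_, ?_⟩
  · intro c hc hcπ
    obtain ⟨c₂, hc₂, hπc⟩ := hcπ
    by_cases hyc : y * c = x
    · right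
      have h1 : y * c = y * π := hyc.trans hxyπ
      exact mul_left_cancel h1
    · left
      have hycT : y * c ∈ T :=
        ⟨S.mul_mem hyS hc, ⟨c₂, hc₂, by rw [hxyπ, hπc]; group⟩, hyc⟩
      have hsub : divSet S y ⊆ divSet S (y * c) :=
        fun e he => ⟨he.1, sdvd_trans he.2 ⟨c, hc, rfl⟩⟩
      have heq := Set.eq_of_subset_of_ncard_le hsub (hymax _ hycT)
        (divSet_finite hS (S.mul_mem hyS hc))
      have hmem : y * c ∈ divSet S y := by
        rw [heq]; exact ⟨S.mul_mem hyS hc, sdvd_refl _⟩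
      have hyyc : y = y * c := sdvd_antisymm hS hyS (S.mul_mem hyS hc) ⟨c, hc, rfl⟩ hmem.2
      have : y * 1 = y * c := by rw [mul_one]; exact hyyc
      exact (mul_left_cancel this).symm
  · have hsub : divSet S y ⊆ divSet S x :=
      fun e he => ⟨he.1, sdvd_trans he.2 ⟨π, hπS, hxyπ⟩⟩
    have hxny : x ∉ divSet S y := by
      intro hmem
      exact hyne (sdvd_antisymm hS hyS hx ⟨π, hπS, hxyπ⟩ hmem.2)
    refine Set.ncard_lt_ncard (hsub.ssubset_of_ne ?_) (divSet_finite hS hx)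
    intro h
    exact hxny (by rw [h]; exact ⟨hx, sdvd_refl x⟩)

/-- The descent lemma: in a castled-free configuration, every divisor of the
cofactor is realized as an lcm cofactor, witnessed by a gcd. -/
theorem descent (hS : IntegralMonoid S) (hhom : Homogeneous S) {w s t : G}
    (hwS : w ∈ S) (hsS : s ∈ S) (htS : t ∈ S)
    (hgcd : ∀ d ∈ S, SDvd S d w → SDvd S d s → d = 1)
    (hlcm : leftSet S w ∩ leftSet S s = leftSet S (w * t)) :
    ∀ x, x ∈ S → SDvd S x t →
      ∀ g, g ∈ S → SDvd S g s → SDvd S g (w * x) →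
        (∀ d ∈ S, SDvd S d s → SDvd S d (w * x) → SDvd S d g) →
        leftSet S w ∩ leftSet S g = leftSet S (w * x) := by
  suffices H : ∀ n x, x ∈ S → SDvd S x t → (divSet S x).ncard = n →
      ∀ g, g ∈ S → SDvd S g s → SDvd S g (w * x) →
        (∀ d ∈ S, SDvd S d s → SDvd S d (w * x) → SDvd S d g) →
        leftSet S w ∩ leftSet S g = leftSet S (w * x) by
    exact fun x hx hxt g h1 h2 h3 h4 => H _ x hx hxt rfl g h1 h2 h3 h4
  intro n
  induction n using Nat.strong_induction_on with
  | _ n IH =>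
  intro x hxS hxt hn g hgS hgs hgwx hgmax
  by_cases hx1 : x = 1
  · subst hx1
    rw [mul_one] at hgwx
    have hg1 : g = 1 := hgcd g hgS hgwx hgs
    subst hg1
    rw [mul_one]
    ext c
    constructor
    · rintro ⟨h1, _⟩; exact h1
    · intro hc
      refine ⟨hc, ?_⟩
      obtain ⟨e, he, rfl⟩ := hc
      exact ⟨w * e, S.mul_mem hwS he, by group⟩
  · obtain ⟨y, π, hyS, hπS, hxyπ, hπ1, hπirr, hylt⟩ := exists_irred_peel hS hxS hx1
    have hyt : SDvd S y t := sdvd_trans ⟨π, hπS, hxyπ⟩ hxt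
    obtain ⟨d, hdS, hds, hdwy, hdmax⟩ := gcd_exists hS hsS (S.mul_mem hwS hyS)
    have hIH : leftSet S w ∩ leftSet S d = leftSet S (w * y) :=
      IH _ (hn ▸ hylt) y hyS hyt rfl d hdS hds hdwy hdmax
    obtain ⟨p, hpS, hwydp⟩ := hdwy
    obtain ⟨s₁, hs₁S, hsds₁⟩ := hds
    have hwtmem : w * t ∈ leftSet S s := by
      have h0 : w * t ∈ leftSet S (w * t) := self_mem_leftSet _
      rw [← hlcm] at h0
      exact h0.2
    obtain ⟨r, hrS, hwtsr⟩ := hwtmem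
    have hgcd' : ∀ e ∈ S, SDvd S e s → SDvd S e w → e = 1 :=
      fun e he h1 h2 => hgcd e he h2 h1
    have hlcm' : leftSet S s ∩ leftSet S w = leftSet S (s * r) := by
      rw [Set.inter_comm, hlcm, ← hwtsr]
    have hm' : leftSet S d ∩ leftSet S w = leftSet S (d * p) := by
      rw [Set.inter_comm, hIH, hwydp]
    obtain ⟨hg₁, hset₁⟩ := shrink hS hhom hsS hwS hrS hdS hs₁S hpS hsds₁ hgcd' hlcm' hm'
    obtain ⟨σ, hσS, htxσ⟩ := hxt
    have hkey : s₁ * r = p * (π * σ) := by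
      have h0 : d * (s₁ * r) = d * (p * (π * σ)) := by
        calc d * (s₁ * r) = s * r := by rw [hsds₁]; group
          _ = w * t := hwtsr.symm
          _ = (w * y) * (π * σ) := by rw [htxσ, hxyπ]; group
          _ = d * (p * (π * σ)) := by rw [hwydp]; group
      exact mul_left_cancel h0
    have hdwx : SDvd S d (w * x) :=
      sdvd_trans ⟨p, hpS, hwydp⟩ (⟨π, hπS, by rw [hxyπ]; group⟩ : SDvd S (w * y) (w * x))
    have hdg : SDvd S d g := hgmax d hdS ⟨s₁, hs₁S, hsds₁⟩ hdwx
    obtain ⟨e, heS, hgde⟩ := hdg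
    have hes₁ : SDvd S e s₁ := by
      obtain ⟨f, hf, hgf⟩ := hgs
      refine ⟨f, hf, ?_⟩
      have : d * s₁ = d * (e * f) := by rw [← hsds₁, hgf, hgde]; group
      exact mul_left_cancel this
    have hemax : ∀ f ∈ S, SDvd S f s₁ → SDvd S f (p * π) → SDvd S f e := by
      intro f hf h1 h2
      have hdfs : SDvd S (d * f) s := by
        obtain ⟨q, hq, hq2⟩ := h1
        exact ⟨q, hq, by rw [hsds₁, hq2]; group⟩
      have hdfwx : SDvd S (d * f) (w * x) := by
        obtain ⟨q, hq, hq2⟩ := h2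
        refine ⟨q, hq, ?_⟩
        calc w * x = (w * y) * π := by rw [hxyπ]; group
          _ = d * (p * π) := by rw [hwydp]; group
          _ = d * (f * q) := by rw [hq2]
          _ = (d * f) * q := by group
      obtain ⟨q, hq, hq2⟩ := hgmax (d * f) (S.mul_mem hdS hf) hdfs hdfwx
      refine ⟨q, hq, ?_⟩
      have : d * e = d * (f * q) := by rw [← hgde, hq2]; group
      exact mul_left_cancel this
    obtain ⟨m', hm'S, hwm', hgm', hsetm'⟩ := lcm_exists hS hwS hgS
    have h1 : SDvd S (w * y) m' := by
      have hmem : m' ∈ leftSet S w ∩ leftSet S d :=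
        ⟨hwm', sdvd_trans ⟨e, heS, hgde⟩ hgm'⟩
      rw [hIH] at hmem
      exact hmem
    obtain ⟨c, hcS, hm'wyc⟩ := h1
    have h2 : SDvd S m' (w * x) := by
      have hmem : w * x ∈ leftSet S w ∩ leftSet S g := ⟨⟨x, hxS, rfl⟩, hgwx⟩
      rw [hsetm'] at hmem
      exact hmem
    obtain ⟨c', hc'S, hwxm'c'⟩ := h2
    have hπcc' : π = c * c' := by
      have h0 : (w * y) * π = (w * y) * (c * c') := by
        calc (w * y) * π = w * x := by rw [hxyπ]; group
          _ = m' * c' := hwxm'c'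
          _ = (w * y) * (c * c') := by rw [hm'wyc]; group
      exact mul_left_cancel h0
    rcases hπirr c hcS ⟨c', hc'S, hπcc'⟩ with hc1 | hcπ
    · exfalso
      have hep : SDvd S e p := by
        obtain ⟨q, hq, hq2⟩ := hgm'
        refine ⟨q, hq, ?_⟩
        have h0 : d * p = d * (e * q) := by
          calc d * p = w * y := hwydp.symm
            _ = m' := by rw [hm'wyc, hc1, mul_one]
            _ = g * q := hq2
            _ = d * (e * q) := by rw [hgde]; group
        exact mul_left_cancel h0
      have he1 : e = 1 := hg₁ e heS hes₁ hep
      have hgcdB : ∀ f ∈ S, SDvd S f s₁ → SDvd S f (p * π) → f = 1 := by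
        intro f hf hh1 hh2
        have hfe := hemax f hf hh1 hh2
        rw [he1] at hfe
        exact sdvd_one hS hf hfe
      have hsetAB : leftSet S s₁ ∩ leftSet S p = leftSet S s₁ ∩ leftSet S (p * π) := by
        ext cc
        constructor
        · intro hcc
          have hcc' : cc ∈ leftSet S (s₁ * r) := by rw [← hset₁]; exact hcc
          obtain ⟨f, hf, rfl⟩ := hcc'
          exact ⟨⟨r * f, S.mul_mem hrS hf, by group⟩,
            ⟨σ * f, S.mul_mem hσS hf, by rw [hkey]; group⟩⟩
        · rintro ⟨hcc1, ⟨f, hf, rfl⟩⟩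
          exact ⟨hcc1, ⟨π * f, S.mul_mem hπS hf, by group⟩⟩
      have hppπ := hhom s₁ p (p * π) hs₁S hpS (S.mul_mem hpS hπS) hg₁ hgcdB hsetAB
      have h0 : p * 1 = p * π := by rw [mul_one]; exact hppπ
      exact hπ1 (mul_left_cancel h0).symm
    · have hm'wx : m' = w * x := by rw [hm'wyc, hcπ, hxyπ]; group
      rw [hsetm', hm'wx]

/-- The pair associated with a divisor `z` of `u*v`: the gcd `a` of `u` and `z`,
and the cofactor `x` of the lcm of `a⁻¹u` and `a⁻¹z` over `a⁻¹u`. -/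
def pairSpec (S : Submonoid G) (u z : G) (pr : G × G) : Prop :=
  pr.1 ∈ S ∧ pr.2 ∈ S ∧ SDvd S pr.1 u ∧ SDvd S pr.1 z ∧
    (∀ d ∈ S, SDvd S d u → SDvd S d z → SDvd S d pr.1) ∧
    leftSet S (pr.1⁻¹ * u) ∩ leftSet S (pr.1⁻¹ * z) = leftSet S ((pr.1⁻¹ * u) * pr.2)

theorem pairSpec_exists (hS : IntegralMonoid S) {u v : G} (hu : u ∈ S) (hv : v ∈ S) :
    ∀ z ∈ divSet S (u * v), ∃ pr, pr ∈ divSet S u ×ˢ divSet S v ∧ pairSpec S u z pr := by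
  rintro z ⟨hzS, hzuv⟩
  obtain ⟨a, haS, hau, haz, hamax⟩ := gcd_exists hS hu hzS
  obtain ⟨u₁, hu₁S, huau₁⟩ := hau
  obtain ⟨z₁, hz₁S, hzaz₁⟩ := haz
  obtain ⟨m, hmS, hu₁m, hz₁m, hsetm⟩ := lcm_exists hS hu₁S hz₁S
  obtain ⟨x, hxS, hmux⟩ := hu₁m
  obtain ⟨ww, hwwS, huvzww⟩ := hzuv
  have huv1 : u₁ * v ∈ leftSet S u₁ ∩ leftSet S z₁ := by
    refine ⟨⟨v, hv, rfl⟩, ⟨ww, hwwS, ?_⟩⟩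
    have h0 : a * (u₁ * v) = a * (z₁ * ww) := by
      calc a * (u₁ * v) = u * v := by rw [huau₁]; group
        _ = z * ww := huvzww
        _ = a * (z₁ * ww) := by rw [hzaz₁]; group
    exact mul_left_cancel h0
  rw [hsetm] at huv1
  obtain ⟨q, hq, huv1q⟩ := huv1
  have hxv : SDvd S x v := by
    refine ⟨q, hq, ?_⟩
    have h0 : u₁ * v = u₁ * (x * q) := by rw [huv1q, hmux]; group
    exact mul_left_cancel h0
  have e1 : a⁻¹ * u = u₁ := by rw [huau₁]; group
  have e2 : a⁻¹ * z = z₁ := by rw [hzaz₁]; group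
  refine ⟨(a, x), ⟨⟨haS, ⟨u₁, hu₁S, huau₁⟩⟩, hxS, hxv⟩, ?_⟩
  refine ⟨haS, hxS, ⟨u₁, hu₁S, huau₁⟩, ⟨z₁, hz₁S, hzaz₁⟩, hamax, ?_⟩
  show leftSet S (a⁻¹ * u) ∩ leftSet S (a⁻¹ * z) = leftSet S ((a⁻¹ * u) * x)
  rw [e1, e2, hsetm, hmux]

theorem pairSpec_unique (hS : IntegralMonoid S) {u z : G} (hu : u ∈ S) (hzS : z ∈ S)
    {pr pr' : G × G} (h : pairSpec S u z pr) (h' : pairSpec S u z pr') : pr = pr' := by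
  obtain ⟨a, x⟩ := pr
  obtain ⟨a', x'⟩ := pr'
  obtain ⟨h1, h2, h3, h4, h5, h6⟩ := h
  obtain ⟨h1', h2', h3', h4', h5', h6'⟩ := h'
  simp only at h1 h2 h3 h4 h5 h6 h1' h2' h3' h4' h5' h6' ⊢
  have ha : a = a' := sdvd_antisymm hS h1 h1' (h5' a h1 h3 h4) (h5 a' h1' h3' h4')
  subst ha
  have hsetx : leftSet S ((a⁻¹ * u) * x) = leftSet S ((a⁻¹ * u) * x') := by
    rw [← h6, ← h6']
  have hu₁S : a⁻¹ * u ∈ S := by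
    obtain ⟨u₁, hu₁S, hh⟩ := h3
    have : a⁻¹ * u = u₁ := by rw [hh]; group
    rw [this]; exact hu₁S
  have hxx : (a⁻¹ * u) * x = (a⁻¹ * u) * x' :=
    leftSet_inj hS (S.mul_mem hu₁S h2) (S.mul_mem hu₁S h2') hsetx
  rw [mul_left_cancel hxx]

theorem pairSpec_inj (hS : IntegralMonoid S) (hhom : Homogeneous S) {u z z' : G}
    (hu : u ∈ S) (hzS : z ∈ S) (hz'S : z' ∈ S) {pr : G × G}
    (h : pairSpec S u z pr) (h' : pairSpec S u z' pr) : z = z' := by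
  obtain ⟨a, x⟩ := pr
  obtain ⟨h1, h2, h3, h4, h5, h6⟩ := h
  obtain ⟨_, _, _, h4', h5', h6'⟩ := h'
  simp only at h1 h2 h3 h4 h5 h6 h4' h5' h6'
  obtain ⟨u₁, hu₁S, huau₁⟩ := h3
  obtain ⟨z₁, hz₁S, hzaz₁⟩ := h4
  obtain ⟨z₁', hz₁'S, hz'az₁'⟩ := h4'
  have e1 : a⁻¹ * u = u₁ := by rw [huau₁]; group
  have e2 : a⁻¹ * z = z₁ := by rw [hzaz₁]; group
  have e2' : a⁻¹ * z' = z₁' := by rw [hz'az₁']; group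
  have hgaux : ∀ (zz zz₁ : G), zz = a * zz₁ →
      (∀ d ∈ S, SDvd S d u → SDvd S d zz → SDvd S d a) →
      ∀ f ∈ S, SDvd S f u₁ → SDvd S f zz₁ → f = 1 := by
    intro zz zz₁ hzz hmax f hf hf1 hf2
    have hafu : SDvd S (a * f) u := by
      obtain ⟨q, hq, hh⟩ := hf1
      exact ⟨q, hq, by rw [huau₁, hh]; group⟩
    have hafz : SDvd S (a * f) zz := by
      obtain ⟨q, hq, hh⟩ := hf2
      exact ⟨q, hq, by rw [hzz, hh]; group⟩
    obtain ⟨q, hq, hq2⟩ := hmax (a * f) (S.mul_mem h1 hf) hafu hafz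
    have h0 : a * 1 = a * (f * q) := by
      rw [mul_one]
      calc a = a * f * q := hq2
        _ = a * (f * q) := by group
    exact mul_eq_one_left hS hf hq (mul_left_cancel h0).symm
  have hg : ∀ f ∈ S, SDvd S f u₁ → SDvd S f z₁ → f = 1 := hgaux z z₁ hzaz₁ h5
  have hg' : ∀ f ∈ S, SDvd S f u₁ → SDvd S f z₁' → f = 1 := hgaux z' z₁' hz'az₁' h5'
  have hsets : leftSet S u₁ ∩ leftSet S z₁ = leftSet S u₁ ∩ leftSet S z₁' := by
    rw [← e1, ← e2, ← e2', h6, h6']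
  have hz₁z₁' := hhom u₁ z₁ z₁' hu₁S hz₁S hz₁'S hg hg' hsets
  rw [hzaz₁, hz'az₁', hz₁z₁']

theorem pairSpec_surj (hS : IntegralMonoid S) (hhom : Homogeneous S) {u v z₀ : G}
    (hu : u ∈ S) (hv : v ∈ S) (hz₀S : z₀ ∈ S)
    (hz₀gcd : ∀ e ∈ S, SDvd S e u → SDvd S e z₀ → e = 1)
    (hz₀lcm : leftSet S u ∩ leftSet S z₀ = leftSet S (u * v)) :
    ∀ pr ∈ divSet S u ×ˢ divSet S v, ∃ z ∈ divSet S (u * v), pairSpec S u z pr := by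
  rintro ⟨a, x'⟩ ⟨⟨haS, hau⟩, hx'S, hx'v⟩
  obtain ⟨s', hs'S, hs'z₀, hs'ux', hs'max⟩ := gcd_exists hS hz₀S (S.mul_mem hu hx'S)
  have hdes : leftSet S u ∩ leftSet S s' = leftSet S (u * x') :=
    descent hS hhom hu hz₀S hv hz₀gcd hz₀lcm x' hx'S hx'v s' hs'S hs'z₀ hs'ux' hs'max
  have hgus' : ∀ e ∈ S, SDvd S e u → SDvd S e s' → e = 1 :=
    fun e he h1 h2 => hz₀gcd e he h1 (sdvd_trans h2 hs'z₀)
  obtain ⟨u₁, hu₁S, huau₁⟩ := hau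
  obtain ⟨m, hmS, ham, hs'm, hsetm⟩ := lcm_exists hS haS hs'S
  obtain ⟨p, hpS, hmap⟩ := ham
  have hm : leftSet S a ∩ leftSet S s' = leftSet S (a * p) := by rw [← hmap]; exact hsetm
  obtain ⟨hg₁, hset₁⟩ := shrink hS hhom hu hs'S hx'S haS hu₁S hpS huau₁ hgus' hdes hm
  have hzS : a * p ∈ S := S.mul_mem haS hpS
  have hpu₁x' : SDvd S p (u₁ * x') := by
    have h0 : u₁ * x' ∈ leftSet S (u₁ * x') := self_mem_leftSet _
    rw [← hset₁] at h0
    exact h0.2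
  have hzuv : SDvd S (a * p) (u * v) := by
    obtain ⟨q, hq, hq2⟩ := hpu₁x'
    obtain ⟨q', hq', hq2'⟩ := hx'v
    refine ⟨q * q', S.mul_mem hq hq', ?_⟩
    calc u * v = (a * (u₁ * x')) * q' := by rw [huau₁, hq2']; group
      _ = (a * p) * (q * q') := by rw [hq2]; group
  refine ⟨a * p, ⟨hzS, hzuv⟩, ?_⟩
  refine ⟨haS, hx'S, ⟨u₁, hu₁S, huau₁⟩, ⟨p, hpS, rfl⟩, ?_, ?_⟩
  · intro f hf hfu hfz
    obtain ⟨n, hnS, hfn, han, hsetn⟩ := lcm_exists hS hf haS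
    obtain ⟨a₂, ha₂S, hna₂⟩ := han
    have hnu : SDvd S n u := by
      have h0 : u ∈ leftSet S f ∩ leftSet S a := ⟨hfu, ⟨u₁, hu₁S, huau₁⟩⟩
      rw [hsetn] at h0; exact h0
    have hnz : SDvd S n (a * p) := by
      have h0 : a * p ∈ leftSet S f ∩ leftSet S a := ⟨hfz, ⟨p, hpS, rfl⟩⟩
      rw [hsetn] at h0; exact h0
    have ha₂u₁ : SDvd S a₂ u₁ := by
      obtain ⟨q, hq, hh⟩ := hnu
      refine ⟨q, hq, ?_⟩
      have h0 : a * u₁ = a * (a₂ * q) := by rw [← huau₁, hh, hna₂]; group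
      exact mul_left_cancel h0
    have ha₂p : SDvd S a₂ p := by
      obtain ⟨q, hq, hh⟩ := hnz
      refine ⟨q, hq, ?_⟩
      have h0 : a * p = a * (a₂ * q) := by rw [hh, hna₂]; group
      exact mul_left_cancel h0
    have ha₂1 : a₂ = 1 := hg₁ a₂ ha₂S ha₂u₁ ha₂p
    have hna : n = a := by rw [hna₂, ha₂1, mul_one]
    rw [← hna]; exact hfn
  · show leftSet S (a⁻¹ * u) ∩ leftSet S (a⁻¹ * (a * p)) = leftSet S ((a⁻¹ * u) * x')
    have e1 : a⁻¹ * u = u₁ := by rw [huau₁]; group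
    have e2 : a⁻¹ * (a * p) = p := by group
    rw [e1, e2]
    exact hset₁

theorem ncard_sprod {α β : Type*} (s : Set α) (t : Set β) :
    (s ×ˢ t).ncard = s.ncard * t.ncard := by
  have h1 : (s ×ˢ t).ncard = Nat.card (s ×ˢ t : Set (α × β)) := Nat.card_coe_set_eq _ |>.symm
  have h2 : s.ncard = Nat.card s := (Nat.card_coe_set_eq _).symm
  have h3 : t.ncard = Nat.card t := (Nat.card_coe_set_eq _).symm
  rw [h1, h2, h3, Nat.card_congr (Equiv.Set.prod s t), Nat.card_prod]

end TauSub

theorem tau_submultiplicative {G : Type*} [Group G] (S : Submonoid G)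
    (hS : IntegralMonoid S) (hhom : Homogeneous S)
    (u v : G) (hu : u ∈ S) (hv : v ∈ S) :
    tau S (u * v) ≤ tau S u * tau S v ∧
      (tau S (u * v) = tau S u * tau S v ↔
        ∃ x ∈ S, (∀ e ∈ S, SDvd S e u → SDvd S e x → e = 1) ∧
          leftSet S u ∩ leftSet S x = leftSet S (u * v)) := by
  classical
  open TauSub in
  have huv : u * v ∈ S := S.mul_mem hu hv
  have hfu : (divSet S u).Finite := divSet_finite hS hu
  have hfv : (divSet S v).Finite := divSet_finite hS hv
  have hfuv : (divSet S (u * v)).Finite := divSet_finite hS huv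
  have hprodfin : (divSet S u ×ˢ divSet S v).Finite := hfu.prod hfv
  choose! Φ hΦmem hΦspec using pairSpec_exists hS hu hv
  have hinjOn : Set.InjOn Φ (divSet S (u * v)) := by
    intro z hz z' hz' heq
    exact pairSpec_inj hS hhom hu hz.1 hz'.1 (hΦspec z hz) (heq ▸ hΦspec z' hz')
  have hle : (divSet S (u * v)).ncard ≤ (divSet S u ×ˢ divSet S v).ncard :=
    Set.ncard_le_ncard_of_injOn Φ hΦmem hinjOn hprodfin
  have hprodcard : (divSet S u ×ˢ divSet S v).ncard = (divSet S u).ncard * (divSet S v).ncard :=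
    ncard_sprod _ _
  have htu : tau S u = (divSet S u).ncard := tau_eq_ncard hS hu
  have htv : tau S v = (divSet S v).ncard := tau_eq_ncard hS hv
  have htuv : tau S (u * v) = (divSet S (u * v)).ncard := tau_eq_ncard hS huv
  constructor
  · rw [htuv, htu, htv, ← hprodcard]
    exact hle
  · constructor
    · intro heq
      have hcard : (divSet S u ×ˢ divSet S v).ncard ≤ (Φ '' divSet S (u * v)).ncard := by
        rw [Set.ncard_image_of_injOn hinjOn, hprodcard]
        rw [htuv, htu, htv] at heq
        exact le_of_eq heq.symm
      have hsub : Φ '' divSet S (u * v) ⊆ divSet S u ×ˢ divSet S v := by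
        rintro pr ⟨z, hz, rfl⟩
        exact hΦmem z hz
      have himg : Φ '' divSet S (u * v) = divSet S u ×ˢ divSet S v :=
        Set.eq_of_subset_of_ncard_le hsub hcard hprodfin
      have hmem : ((1 : G), v) ∈ Φ '' divSet S (u * v) := by
        rw [himg]
        exact ⟨⟨S.one_mem, one_sdvd hu⟩, ⟨hv, sdvd_refl v⟩⟩
      obtain ⟨z, hzmem, hzpr⟩ := hmem
      have hrel := hΦspec z hzmem
      rw [hzpr] at hrel
      obtain ⟨h1, h2, h3, h4, h5, h6⟩ := hrel
      refine ⟨z, hzmem.1, ?_, ?_⟩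
      · intro e he he1 he2
        exact sdvd_one hS he (h5 e he he1 he2)
      · have h6' : leftSet S ((1 : G)⁻¹ * u) ∩ leftSet S ((1 : G)⁻¹ * z) =
            leftSet S (((1 : G)⁻¹ * u) * v) := h6
        simpa only [inv_one, one_mul] using h6'
    · rintro ⟨z₀, hz₀S, hz₀gcd, hz₀lcm⟩
      have hsurj : divSet S u ×ˢ divSet S v ⊆ Φ '' divSet S (u * v) := by
        intro pr hpr
        obtain ⟨z, hzmem, hzspec⟩ := pairSpec_surj hS hhom hu hv hz₀S hz₀gcd hz₀lcm pr hpr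
        exact ⟨z, hzmem, pairSpec_unique hS hu hzmem.1 (hΦspec z hzmem) hzspec⟩
      have h2 : (divSet S u ×ˢ divSet S v).ncard ≤ (divSet S (u * v)).ncard := by
        calc (divSet S u ×ˢ divSet S v).ncard ≤ (Φ '' divSet S (u * v)).ncard :=
              Set.ncard_le_ncard hsurj (hfuv.image Φ)
          _ = (divSet S (u * v)).ncard := Set.ncard_image_of_injOn hinjOn
      rw [htuv, htu, htv, ← hprodcard]
      exact le_antisymm hle h2
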